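/- Suppose the Brascamp–Lieb datum (B,c) is feasible and B_j B_j^* = I_{n_j} for all j = 1, …, m. Then det(∑_{j=1}^m c_j B_j^* B_j) ≤ 1. -/

import Mathlib

open MeasureTheory ENNReal Matrix Filter Topology

noncomputable section

/-- The space of `m`-transformations: tuples of linear maps `ℝ^n → ℝ^{n_j}`,
represented as matrices. -/
abbrev MTrans (m n : ℕ) (nd : Fin m → ℕ) := ∀ j : Fin m, Matrix (Fin (nd j)) (Fin n) ℝ

/-- A valid input for the Brascamp–Lieb inequality: each `f j` is measurable and
has positive finite integral. -/
def IsInput {m : ℕ} {nd : Fin m → ℕ} (f : ∀ j : Fin m, (Fin (nd j) → ℝ) → ℝ≥0∞) : Prop :=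
  ∀ j, Measurable (f j) ∧ 0 < ∫⁻ y, f j y ∧ ∫⁻ y, f j y < ⊤

/-- The Brascamp–Lieb ratio `BL(B,c;f)`. -/
def BLratio {m n : ℕ} {nd : Fin m → ℕ} (B : MTrans m n nd) (c : Fin m → ℝ)
    (f : ∀ j : Fin m, (Fin (nd j) → ℝ) → ℝ≥0∞) : ℝ≥0∞ :=
  (∫⁻ x : Fin n → ℝ, ∏ j, f j (B j *ᵥ x) ^ c j) / ∏ j, (∫⁻ y, f j y) ^ c j

/-- The Brascamp–Lieb constant `BL(B,c)`. -/
def BLconst {m n : ℕ} {nd : Fin m → ℕ} (B : MTrans m n nd) (c : Fin m → ℝ) : ℝ≥0∞ :=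
  ⨆ (f : ∀ j : Fin m, (Fin (nd j) → ℝ) → ℝ≥0∞) (_ : IsInput f), BLratio B c f

/-- Membership in `F(c)`: finite BL constant and projection-normalised. -/
def MemF {m n : ℕ} {nd : Fin m → ℕ} (B : MTrans m n nd) (c : Fin m → ℝ) : Prop :=
  BLconst B c < ⊤ ∧ ∀ j, B j * (B j)ᵀ = 1

/-- Membership in `G(c)`: the datum `(B,c)` is geometric. -/
def Geometric {m n : ℕ} {nd : Fin m → ℕ} (B : MTrans m n nd) (c : Fin m → ℝ) : Prop :=
  (∀ j, B j * (B j)ᵀ = 1) ∧ ∑ j, c j • ((B j)ᵀ * B j) = 1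

/-- Equivalence of `m`-transformations: `B̃_j = T_j⁻¹ B_j T` for invertible `T, T_j`. -/
def EquivTrans {m n : ℕ} {nd : Fin m → ℕ} (B Bt : MTrans m n nd) : Prop :=
  ∃ (T : Matrix (Fin n) (Fin n) ℝ) (Tj : ∀ j, Matrix (Fin (nd j)) (Fin (nd j)) ℝ),
    IsUnit T ∧ (∀ j, IsUnit (Tj j)) ∧ ∀ j, Bt j = (Tj j)⁻¹ * B j * T

open scoped ComplexOrder in
/-- The positive semidefinite square root of a positive semidefinite matrix (Mathlib's former
`Matrix.PosSemidef.sqrt`, removed upstream; restated with its old definition). -/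
noncomputable def Matrix.PosSemidef.sqrt {n 𝕜 : Type*} [Fintype n] [RCLike 𝕜] [DecidableEq n]
    {A : Matrix n n 𝕜} (hA : A.PosSemidef) : Matrix n n 𝕜 :=
  hA.1.eigenvectorUnitary.1 * diagonal ((↑) ∘ (√·) ∘ hA.1.eigenvalues) *
  (star hA.1.eigenvectorUnitary : Matrix n n 𝕜)

open Classical in
/-- The map `φ`: `φ(B)_j = (B_j B_j^*)^{-1/2} B_j` (defined where `B_j B_j^*` is
positive definite, and as `B_j` otherwise). -/
def phiMap {m n : ℕ} {nd : Fin m → ℕ} (B : MTrans m n nd) : MTrans m n nd := fun j =>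
  if h : (B j * (B j)ᵀ).PosDef then (h.posSemidef.sqrt)⁻¹ * B j else B j

open Classical in
/-- The map `ψ`: `ψ(B)_j = B_j M^{-1/2}` with `M = ∑ c_j B_j^* B_j` (defined where `M`
is positive definite, and as `B_j` otherwise). -/
def psiMap {m n : ℕ} {nd : Fin m → ℕ} (c : Fin m → ℝ) (B : MTrans m n nd) : MTrans m n nd :=
  fun j =>
    if h : (∑ i, c i • ((B i)ᵀ * B i)).PosDef then B j * (h.posSemidef.sqrt)⁻¹ else B j

/-- The BL scaling map `Φ = φ ∘ ψ`. -/
def PhiMap {m n : ℕ} {nd : Fin m → ℕ} (c : Fin m → ℝ) (B : MTrans m n nd) : MTrans m n nd :=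
  phiMap (psiMap c B)

/-- The operator norm of a matrix, viewed as a linear map between Euclidean spaces. -/
def opNorm {a b : ℕ} (A : Matrix (Fin a) (Fin b) ℝ) : ℝ :=
  ‖LinearMap.toContinuousLinearMap (Matrix.toEuclideanLin A)‖



private lemma gauss_lintegral (k : ℕ) {a : ℝ} (ha : 0 < a) :
    ∫⁻ y : Fin k → ℝ, ENNReal.ofReal (Real.exp (-(a * ∑ i, y i ^ 2))) =
      ENNReal.ofReal ((Real.sqrt (Real.pi / a)) ^ k) := by
  have h1 : ∀ y : Fin k → ℝ, Real.exp (-(a * ∑ i, y i ^ 2)) =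
      ∏ i, Real.exp (-(a * y i ^ 2)) := by
    intro y
    rw [← Real.exp_sum]
    congr 1
    rw [Finset.mul_sum]
    simp
  simp_rw [h1]
  rw [← MeasureTheory.ofReal_integral_eq_lintegral_ofReal]
  · rw [MeasureTheory.volume_pi, MeasureTheory.integral_fintype_prod_eq_pow (fun x : ℝ => Real.exp (-(a*x^2)))]
    simp_rw [neg_mul_eq_neg_mul]
    rw [integral_gaussian]
    simp
  · exact MeasureTheory.Integrable.fintype_prod
      (f := fun _ : Fin k => fun x : ℝ => Real.exp (-(a*x^2)))
      (fun i => by simpa [neg_mul] using integrable_exp_neg_mul_sq ha)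
  · filter_upwards with y using Finset.prod_nonneg fun i _ => (Real.exp_pos _).le

private lemma trace_eq_sum_eigenvalues {n : ℕ} {A : Matrix (Fin n) (Fin n) ℝ}
    (hA : A.IsHermitian) : A.trace = ∑ i, hA.eigenvalues i := by
  simpa using hA.trace_eq_sum_eigenvalues

private lemma det_le_one_of_trace_le {n : ℕ} {A : Matrix (Fin n) (Fin n) ℝ} (hA : A.PosSemidef)
    (htr : A.trace ≤ (n : ℝ)) : A.det ≤ 1 := by
  rcases Nat.eq_zero_or_pos n with hn | hn
  · subst hn; simp [Matrix.det_isEmpty]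
  have hnR : (0:ℝ) < n := by exact_mod_cast hn
  have hev := hA.eigenvalues_nonneg
  have hdet : A.det = ∏ i, hA.1.eigenvalues i := by
    have := hA.1.det_eq_prod_eigenvalues
    simpa using this
  rw [hdet]
  have hgm : ∏ i, (hA.1.eigenvalues i) ^ ((1:ℝ)/n) ≤ ∑ i, (1/(n:ℝ)) * hA.1.eigenvalues i := by
    exact Real.geom_mean_le_arith_mean_weighted Finset.univ (fun _ => (1:ℝ)/n)
      hA.1.eigenvalues (fun i _ => by positivity) (by simp [Finset.sum_const]; field_simp)
      (fun i _ => hev i)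
  have hsum : ∑ i, (1/(n:ℝ)) * hA.1.eigenvalues i ≤ 1 := by
    rw [← Finset.mul_sum]
    have htr' : ∑ i, hA.1.eigenvalues i ≤ (n:ℝ) := by
      rw [← trace_eq_sum_eigenvalues hA.1]; exact htr
    rw [one_div]
    calc (n:ℝ)⁻¹ * ∑ i, hA.1.eigenvalues i ≤ (n:ℝ)⁻¹ * n :=
      mul_le_mul_of_nonneg_left htr' (by positivity)
    _ = 1 := by field_simp
  have key : (∏ i, (hA.1.eigenvalues i) ^ ((1:ℝ)/n)) ^ n ≤ 1 :=
    pow_le_one₀ (Finset.prod_nonneg fun i _ => Real.rpow_nonneg (hev i) _) (hgm.trans hsum)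
  calc ∏ i, hA.1.eigenvalues i
      = (∏ i, (hA.1.eigenvalues i) ^ ((1:ℝ)/n)) ^ n := by
        rw [← Finset.prod_pow]
        refine Finset.prod_congr rfl fun i _ => ?_
        rw [← Real.rpow_natCast ((hA.1.eigenvalues i) ^ ((1:ℝ)/n)) n,
          ← Real.rpow_mul (hev i)]
        rw [one_div, inv_mul_cancel₀ (by positivity : (n:ℝ) ≠ 0), Real.rpow_one]
    _ ≤ 1 := key

private lemma BL_sum_le {m n : ℕ} {nd : Fin m → ℕ} (c : Fin m → ℝ)
    (hc : ∀ j, 0 < c j) (B : MTrans m n nd) (hB : BLconst B c < ⊤)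
    (hproj : ∀ j, B j * (B j)ᵀ = 1) :
    ∑ j, c j * (nd j : ℝ) ≤ (n : ℝ) := by
  by_contra hcon
  push_neg at hcon
  set S := ∑ j, c j * (nd j : ℝ) with hSdef
  have hS0 : 0 < S := lt_of_le_of_lt (Nat.cast_nonneg n) hcon
  have hsq : 0 < Real.sqrt S := Real.sqrt_pos.2 hS0
  have hsqn : 0 < Real.sqrt S ^ n := pow_pos hsq n
  set C := (BLconst B c).toReal with hCdef
  have hC0 : 0 ≤ C := ENNReal.toReal_nonneg
  set K := C * Real.sqrt S ^ n + 1 with hKdef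
  have hK0 : 0 < K := by positivity
  have hne : (n:ℝ) - S ≠ 0 := by intro h; linarith
  set u := K ^ ((1:ℝ)/((n:ℝ) - S)) with hudef
  have hu0 : 0 < u := Real.rpow_pos_of_pos hK0 _
  set t := Real.pi / u ^ 2 with htdef
  have ht0 : 0 < t := by positivity
  have hpt : Real.pi / t = u ^ 2 := by
    rw [htdef]
    field_simp
  have hsqrtu : Real.sqrt (Real.pi / t) = u := by rw [hpt, Real.sqrt_sq hu0.le]
  -- row normalisation
  have hrow : ∀ (j : Fin m) (i : Fin (nd j)), ∑ k, (B j i k) ^ 2 = 1 := by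
    intro j i
    have h := congrFun (congrFun (hproj j) i) i
    simpa [Matrix.mul_apply, Matrix.transpose_apply, Matrix.one_apply_eq, pow_two] using h
  have hq : ∀ (j : Fin m) (x : Fin n → ℝ),
      ∑ i, ((B j *ᵥ x) i) ^ 2 ≤ (nd j : ℝ) * ∑ i, x i ^ 2 := by
    intro j x
    calc ∑ i, ((B j *ᵥ x) i) ^ 2 ≤ ∑ _i : Fin (nd j), (1 * ∑ k, x k ^ 2) := by
          refine Finset.sum_le_sum fun i _ => ?_
          have hCS := Finset.sum_mul_sq_le_sq_mul_sq Finset.univ (fun k => B j i k) x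
          rw [hrow j i] at hCS
          simpa [Matrix.mulVec, dotProduct] using hCS
      _ = (nd j : ℝ) * ∑ k, x k ^ 2 := by
          simp [Finset.sum_const, Finset.card_univ, nsmul_eq_mul]
  -- the Gaussian input
  set ft : ∀ j : Fin m, (Fin (nd j) → ℝ) → ℝ≥0∞ :=
    fun j y => ENNReal.ofReal (Real.exp (-(t * ∑ i, y i ^ 2))) with hftdef
  have hftint : ∀ j, ∫⁻ y, ft j y = ENNReal.ofReal (u ^ (nd j)) := by
    intro j
    rw [hftdef]
    rw [gauss_lintegral (nd j) ht0, hsqrtu]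
  have hinput : IsInput ft := by
    intro j
    refine ⟨?_, ?_, ?_⟩
    · exact (Real.continuous_exp.comp ((continuous_const.mul
        (continuous_finset_sum _ fun i _ => (continuous_apply i).pow 2)).neg)).measurable.ennreal_ofReal
    · rw [hftint j]; exact ENNReal.ofReal_pos.2 (pow_pos hu0 _)
    · rw [hftint j]; exact ENNReal.ofReal_lt_top
  -- numerator lower bound
  have hnum : ENNReal.ofReal ((Real.sqrt (Real.pi / (t * S))) ^ n)
      ≤ ∫⁻ x : Fin n → ℝ, ∏ j, ft j (B j *ᵥ x) ^ c j := by
    rw [← gauss_lintegral n (by positivity : 0 < t * S)]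
    refine lintegral_mono fun x => ?_
    have hterm : ∀ j, ft j (B j *ᵥ x) ^ c j
        = ENNReal.ofReal (Real.exp (-(t * ∑ i, ((B j *ᵥ x) i) ^ 2) * c j)) := by
      intro j
      rw [hftdef]
      rw [ENNReal.ofReal_rpow_of_pos (Real.exp_pos _), ← Real.exp_mul]
    rw [Finset.prod_congr rfl fun j _ => hterm j,
      ← ENNReal.ofReal_prod_of_nonneg (fun j _ => (Real.exp_pos _).le), ← Real.exp_sum]
    refine ENNReal.ofReal_le_ofReal (Real.exp_le_exp.2 ?_)
    have hrearr : ∑ j, -(t * ∑ i, ((B j *ᵥ x) i) ^ 2) * c j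
        = -(t * ∑ j, c j * ∑ i, ((B j *ᵥ x) i) ^ 2) := by
      rw [Finset.mul_sum, ← Finset.sum_neg_distrib]
      exact Finset.sum_congr rfl fun j _ => by ring
    rw [hrearr, neg_le_neg_iff]
    rw [mul_assoc]
    refine mul_le_mul_of_nonneg_left ?_ ht0.le
    calc ∑ j, c j * ∑ i, ((B j *ᵥ x) i) ^ 2
        ≤ ∑ j, c j * ((nd j : ℝ) * ∑ i, x i ^ 2) :=
          Finset.sum_le_sum fun j _ => mul_le_mul_of_nonneg_left (hq j x) (hc j).le
      _ = S * ∑ i, x i ^ 2 := by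
            rw [hSdef, Finset.sum_mul]
            exact Finset.sum_congr rfl fun j _ => by ring
  -- denominator value
  have hden : (∏ j, (∫⁻ y, ft j y) ^ c j) = ENNReal.ofReal (u ^ S) := by
    have h1 : ∀ j : Fin m, (∫⁻ y, ft j y) ^ c j
        = ENNReal.ofReal (u ^ ((nd j : ℝ) * c j)) := by
      intro j
      rw [hftint j, ENNReal.ofReal_rpow_of_pos (pow_pos hu0 _), ← Real.rpow_natCast u (nd j),
        ← Real.rpow_mul hu0.le]
    rw [Finset.prod_congr rfl fun j _ => h1 j,
      ← ENNReal.ofReal_prod_of_nonneg (fun j _ => (Real.rpow_pos_of_pos hu0 _).le),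
      ← Real.rpow_sum_of_pos hu0]
    rw [hSdef, Finset.sum_congr rfl fun (j : Fin m) (_ : j ∈ Finset.univ) =>
      mul_comm ((nd j : ℝ)) (c j)]
  -- combine
  have hratio : ENNReal.ofReal ((Real.sqrt (Real.pi/(t*S)))^n / u ^ S) ≤ BLratio B c ft := by
    simp only [BLratio]
    rw [hden, ENNReal.ofReal_div_of_pos (Real.rpow_pos_of_pos hu0 _)]
    exact ENNReal.div_le_div_right hnum _
  have huS : (0:ℝ) < u ^ S := Real.rpow_pos_of_pos hu0 _
  have hKu : u ^ ((n:ℝ)) = K * u ^ S := by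
    have h3 : u ^ ((n:ℝ) - S) = K := by
      rw [hudef, ← Real.rpow_mul hK0.le, one_div, inv_mul_cancel₀ hne, Real.rpow_one]
    calc u ^ ((n:ℝ)) = u ^ ((n:ℝ) - S + S) := by ring_nf
      _ = u ^ ((n:ℝ) - S) * u ^ S := Real.rpow_add hu0 _ _
      _ = K * u ^ S := by rw [h3]
  have hval : (Real.sqrt (Real.pi/(t*S)))^n / u ^ S = K / Real.sqrt S ^ n := by
    have h2 : Real.pi/(t*S) = (Real.pi/t)/S := by rw [div_div]
    rw [h2, Real.sqrt_div (by positivity : (0:ℝ) ≤ Real.pi/t), hsqrtu, div_pow,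
      ← Real.rpow_natCast u n, hKu]
    field_simp
  have hfinal : ENNReal.ofReal (K / Real.sqrt S ^ n) ≤ BLconst B c :=
    le_trans (hval ▸ hratio) (le_iSup₂_of_le ft hinput le_rfl)
  rw [ENNReal.ofReal_le_iff_le_toReal hB.ne] at hfinal
  have hgt : C < K / Real.sqrt S ^ n := by
    rw [lt_div_iff₀ hsqn, hKdef]
    linarith
  rw [← hCdef] at hfinal
  linarith


theorem det_isotropy_le_one {m n : ℕ} {nd : Fin m → ℕ} (c : Fin m → ℝ)
    (hc : ∀ j, 0 < c j) (B : MTrans m n nd) (hB : BLconst B c < ⊤)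
    (hproj : ∀ j, B j * (B j)ᵀ = 1) :
    (∑ j, c j • ((B j)ᵀ * B j)).det ≤ 1 := by
  have hsum := BL_sum_le c hc B hB hproj
  have hM : (∑ j, c j • ((B j)ᵀ * B j)).PosSemidef := by
    refine Finset.sum_induction _ _ (fun a b ha hb => ha.add hb) Matrix.PosSemidef.zero ?_
    intro j _
    have h1 : ((B j)ᵀ * B j).PosSemidef := by
      have h := Matrix.posSemidef_conjTranspose_mul_self (B j)
      rwa [Matrix.conjTranspose_eq_transpose_of_trivial] at h
    refine ⟨?_, fun x => ?_⟩
    · rw [Matrix.IsHermitian, Matrix.conjTranspose_smul, star_trivial, h1.1.eq]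
    · exact (h1.smul (hc j).le).2 x
  have htr : (∑ j, c j • ((B j)ᵀ * B j)).trace = ∑ j, c j * (nd j : ℝ) := by
    rw [Matrix.trace_sum]
    refine Finset.sum_congr rfl fun j _ => ?_
    rw [Matrix.trace_smul, smul_eq_mul]
    congr 1
    rw [Matrix.trace_mul_comm, hproj j, Matrix.trace_one]
    simp
  exact det_le_one_of_trace_le hM (htr ▸ hsum)

end
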